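/- Symmetrization lemma: let Γ be a countable group, μ a symmetric probability measure on Γ, and (B,ν) a probability space equipped with a measurable action of Γ such that, for every γ ∈ Γ, the pushforward measure (γ⁻¹)_*ν is absolutely continuous with respect to ν, with Radon–Nikodym derivative c(γ,·) = d((γ⁻¹)_*ν)/dν. Let f : Γ × B → ℝ be measurable in the second variable, satisfy the additive cocycle identity f(γγ',ξ) = f(γ, γ'ξ) + f(γ',ξ) for all γ, γ' ∈ Γ and ξ ∈ B, and be integrable in the sense that Σ_γ μ(γ)·∫_B |f(γ,ξ)| dν(ξ) < ∞. Then Σ_γ μ(γ)·∫_B f(γ,ξ) dν(ξ) = Σ_γ μ(γ)·∫_B f(γ,ξ)·(1−c(γ,ξ))/2 dν(ξ). -/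

import Mathlib

open MeasureTheory

/-- **symmetrization lemma.** For a symmetric probability measure `μ` on a
countable group acting measurably on a probability space `(B, ν)` with quasi-invariant
measure `ν`, and an integrable additive cocycle `f`, one has
`∑_γ μ(γ) ∫ f(γ,ξ) dν(ξ) = ∑_γ μ(γ) ∫ f(γ,ξ) (1 - c(γ,ξ))/2 dν(ξ)`. -/
theorem symmetrization_lemma
    {Γ : Type*} [Group Γ] [Countable Γ]
    (μ : Γ → ℝ) (hpos : ∀ g, 0 ≤ μ g) (hprob : HasSum μ 1)
    (hsymm : ∀ g : Γ, μ g⁻¹ = μ g)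
    {B : Type*} [MeasurableSpace B] [MulAction Γ B]
    (hmeas : ∀ γ : Γ, Measurable fun ξ : B => γ • ξ)
    (ν : Measure B) [IsProbabilityMeasure ν]
    (hqi : ∀ γ : Γ, ν.map (fun ξ => γ⁻¹ • ξ) ≪ ν)
    (c : Γ → B → ℝ)
    (hc : ∀ γ : Γ, c γ = fun ξ => ((ν.map (fun ξ => γ⁻¹ • ξ)).rnDeriv ν ξ).toReal)
    (f : Γ → B → ℝ)
    (hfmeas : ∀ γ : Γ, Measurable (f γ))
    (hcocycle : ∀ (γ γ' : Γ) (ξ : B), f (γ * γ') ξ = f γ (γ' • ξ) + f γ' ξ)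
    (hintf : ∀ γ : Γ, Integrable (f γ) ν)
    (hint : Summable fun γ : Γ => μ γ * ∫ ξ, |f γ ξ| ∂ν) :
    ∑' γ : Γ, μ γ * ∫ ξ, f γ ξ ∂ν =
      ∑' γ : Γ, μ γ * ∫ ξ, f γ ξ * (1 - c γ ξ) / 2 ∂ν := by
  have hf1 : ∀ ξ, f 1 ξ = 0 := fun ξ => by
    have := hcocycle 1 1 ξ; simp at this; linarith
  have hinv : ∀ (γ : Γ) ξ, f γ (γ⁻¹ • ξ) = - f γ⁻¹ ξ := fun γ ξ => by
    have := hcocycle γ γ⁻¹ ξ; simp [hf1] at this; linarith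
  -- instances
  have hprobmap : ∀ γ : Γ, IsProbabilityMeasure (ν.map (fun ξ => γ⁻¹ • ξ)) :=
    fun γ => Measure.isProbabilityMeasure_map (hmeas γ⁻¹).aemeasurable
  have hint' : ∀ γ : Γ, Integrable (f γ) (ν.map (fun ξ => γ⁻¹ • ξ)) := by
    intro γ
    rw [integrable_map_measure (hfmeas γ).aestronglyMeasurable (hmeas γ⁻¹).aemeasurable]
    have : (fun ξ => f γ (γ⁻¹ • ξ)) = fun ξ => - f γ⁻¹ ξ := funext fun ξ => hinv γ ξ
    simp only [Function.comp_def, this]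
    exact (hintf γ⁻¹).neg
  have key : ∀ γ : Γ, ∫ ξ, f γ ξ * c γ ξ ∂ν = - ∫ ξ, f γ⁻¹ ξ ∂ν := by
    intro γ
    have := hprobmap γ
    calc ∫ ξ, f γ ξ * c γ ξ ∂ν
        = ∫ ξ, ((ν.map (fun ξ => γ⁻¹ • ξ)).rnDeriv ν ξ).toReal • f γ ξ ∂ν := by
          simp [hc, mul_comm, smul_eq_mul]
      _ = ∫ ξ, f γ ξ ∂(ν.map (fun ξ => γ⁻¹ • ξ)) := integral_rnDeriv_smul (hqi γ)
      _ = ∫ ξ, f γ (γ⁻¹ • ξ) ∂ν :=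
          integral_map (hmeas γ⁻¹).aemeasurable (hfmeas γ).aestronglyMeasurable
      _ = - ∫ ξ, f γ⁻¹ ξ ∂ν := by
          simp_rw [hinv]; exact integral_neg _
  have hintfc : ∀ γ : Γ, Integrable (fun ξ => f γ ξ * c γ ξ) ν := by
    intro γ
    have := hprobmap γ
    have h := (integrable_rnDeriv_smul_iff (hqi γ)).mpr (hint' γ)
    simpa [hc, mul_comm, smul_eq_mul] using h
  -- summability of γ ↦ μ γ * ∫ f γ
  have hsum1 : Summable fun γ : Γ => μ γ * ∫ ξ, f γ ξ ∂ν := by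
    apply Summable.of_norm_bounded hint
    intro γ
    rw [norm_mul, Real.norm_eq_abs, Real.norm_eq_abs, abs_of_nonneg (hpos γ)]
    refine mul_le_mul_of_nonneg_left ?_ (hpos γ)
    simpa [Real.norm_eq_abs] using norm_integral_le_integral_norm (μ := ν) (f γ)
  -- reindexing by inverse
  have hreindex : (∑' γ : Γ, μ γ * ∫ ξ, f γ ξ ∂ν)
      = ∑' γ : Γ, μ γ * ∫ ξ, f γ⁻¹ ξ ∂ν := by
    rw [← (Equiv.inv Γ).tsum_eq (fun γ => μ γ * ∫ ξ, f γ ξ ∂ν)]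
    simp [hsymm]
  have hAB : (∑' γ : Γ, μ γ * ∫ ξ, f γ ξ ∂ν)
      = - ∑' γ : Γ, μ γ * ∫ ξ, f γ ξ * c γ ξ ∂ν := by
    rw [hreindex, ← tsum_neg]
    congr 1; funext γ; rw [key γ]; ring
  have hsum2 : Summable fun γ : Γ => μ γ * ∫ ξ, f γ ξ * c γ ξ ∂ν := by
    have : (fun γ : Γ => μ γ * ∫ ξ, f γ ξ * c γ ξ ∂ν)
        = fun γ => -(μ γ⁻¹ * ∫ ξ, f γ⁻¹ ξ ∂ν) := by
      funext γ; rw [key γ, hsymm]; ring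
    rw [this]
    exact ((Equiv.inv Γ).summable_iff.mpr hsum1).neg
  -- rewrite RHS termwise
  have hterm : ∀ γ : Γ, (∫ ξ, f γ ξ * (1 - c γ ξ) / 2 ∂ν)
      = ((∫ ξ, f γ ξ ∂ν) - ∫ ξ, f γ ξ * c γ ξ ∂ν) / 2 := by
    intro γ
    have : (fun ξ => f γ ξ * (1 - c γ ξ) / 2)
        = fun ξ => (f γ ξ - f γ ξ * c γ ξ) / 2 := by funext ξ; ring
    rw [this]
    rw [integral_div, integral_sub (hintf γ) (hintfc γ)]
  calc ∑' γ : Γ, μ γ * ∫ ξ, f γ ξ ∂ν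
      = ((∑' γ : Γ, μ γ * ∫ ξ, f γ ξ ∂ν)
          - ∑' γ : Γ, μ γ * ∫ ξ, f γ ξ * c γ ξ ∂ν) / 2 := by
        rw [hAB]; ring
    _ = ∑' γ : Γ, μ γ * ∫ ξ, f γ ξ * (1 - c γ ξ) / 2 ∂ν := by
        rw [← Summable.tsum_sub hsum1 hsum2, ← tsum_div_const]
        congr 1; funext γ; rw [hterm γ]; ring
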